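/- The curve w̃ in ℓ² defined by w̃(t) = (2√2/π) · Σ_{k=1}^∞ sin(π(k−1/2)t)/(2k−1) · e_k satisfies ⟨w̃(t) − w̃(s), w̃(u) − w̃(v)⟩₂ = 0 whenever 0 ≤ v ≤ u ≤ s ≤ t ≤ 1, i.e., increments over disjoint time intervals are orthogonal. -/

import Mathlib

open Real

lemma bern2 (x : ℝ) : (Polynomial.map (algebraMap ℚ ℝ) (Polynomial.bernoulli 2)).eval x = x^2 - x + 1/6 := by
  norm_num [Polynomial.bernoulli, Finset.sum_range_succ, bernoulli_eq_bernoulli'_of_ne_one, bernoulli'_two]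
  ring

lemma cos_sum_base {x : ℝ} (hx : x ∈ Set.Icc (0:ℝ) 1) :
    HasSum (fun n : ℕ => 1 / (n : ℝ) ^ 2 * Real.cos (2 * π * n * x)) (π^2 * (x^2 - x + 1/6)) := by
  have h := hasSum_one_div_nat_pow_mul_cos (k := 1) one_ne_zero hx
  rw [bern2] at h
  convert h using 2
  all_goals norm_num
  all_goals ring

lemma oddCos {θ : ℝ} (h0 : 0 ≤ θ) (hπ : θ ≤ π) :
    HasSum (fun k : ℕ => Real.cos ((2*(k:ℝ)+1)*θ) / (2*(k:ℝ)+1)^2) (π^2/8 - π*θ/4) := by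
  have hpi := Real.pi_pos
  have hπ0 : (π:ℝ) ≠ 0 := ne_of_gt hpi
  set f : ℕ → ℝ := fun n => Real.cos (n*θ) / (n : ℝ)^2 with hf
  have hall : HasSum f (π^2 * ((θ/(2*π))^2 - θ/(2*π) + 1/6)) := by
    have hx : θ/(2*π) ∈ Set.Icc (0:ℝ) 1 := by
      constructor
      · positivity
      · rw [div_le_one (by positivity)]; linarith
    have h := cos_sum_base hx
    convert h using 2 with n
    have harg : 2 * π * (n:ℝ) * (θ/(2*π)) = n*θ := by field_simp
    rw [hf, harg]
    ring
  have heven : HasSum (fun k => f (2*k)) ((π^2 * ((θ/π)^2 - θ/π + 1/6))/4) := by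
    have hx : θ/π ∈ Set.Icc (0:ℝ) 1 := by
      constructor
      · positivity
      · rw [div_le_one hpi]; linarith
    have h := (cos_sum_base hx).div_const 4
    convert h using 2 with n
    swap
    have harg : 2 * π * (n:ℝ) * (θ/π) = (2*n) * θ := by field_simp
    rw [hf, harg]
    push_cast
    rcases Nat.eq_zero_or_pos n with h0 | h0
    · subst h0; norm_num
    · have hn : ((n:ℝ)) ≠ 0 := Nat.cast_ne_zero.mpr h0.ne'
      field_simp
      ring
    rfl
  have hsummable : Summable (fun k : ℕ => f (2*k+1)) := by
    have hb : Summable (fun k : ℕ => 1 / ((k:ℝ)+1)^2) := by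
      have := Real.summable_one_div_nat_pow.mpr (show 1 < 2 by norm_num)
      exact_mod_cast (summable_nat_add_iff 1).mpr this
    apply Summable.of_abs
    apply Summable.of_nonneg_of_le (fun k => abs_nonneg _) _ hb
    intro k
    rw [hf]
    simp only []
    rw [abs_div]
    calc |Real.cos ((2*k+1 : ℕ)*θ)| / |((2*k+1 : ℕ):ℝ)^2| ≤ 1 / |((2*k+1 : ℕ):ℝ)^2| := by
          gcongr; exact Real.abs_cos_le_one _
      _ ≤ 1 / ((k:ℝ)+1)^2 := by
          rw [abs_of_pos (by positivity)]
          gcongr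
          push_cast; linarith
  obtain ⟨T, hT⟩ := hsummable
  have htot := heven.even_add_odd hT
  have hTeq : T = π^2/8 - π*θ/4 := by
    have h2 := hall.unique htot
    have key : π^2 * ((θ/(2*π))^2 - θ/(2*π) + 1/6) - (π^2 * ((θ/π)^2 - θ/π + 1/6))/4
        = π^2/8 - π*θ/4 := by
      field_simp
      ring
    linarith
  rw [hTeq] at hT
  convert hT using 2 with k
  rw [hf]
  push_cast
  ring_nf

noncomputable def cc (k : ℕ) (t : ℝ) : ℝ :=
  (2 * Real.sqrt 2 / Real.pi) * (Real.sin (Real.pi * ((k : ℝ) + 1/2) * t) / (2 * (k : ℝ) + 1))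

lemma coord_eq {g : lp (fun _ : ℕ => ℝ) 2} {t : ℝ}
    (h : HasSum (fun k : ℕ => cc k t • lp.single 2 k (1:ℝ)) g) (k : ℕ) :
    (inner ℝ (lp.single 2 k (1:ℝ)) g : ℝ) = cc k t := by
  have h' := (innerSL ℝ (lp.single 2 k (1:ℝ) : lp (fun _ : ℕ => ℝ) 2)).hasSum h
  have hterm : (fun j : ℕ => (innerSL ℝ (lp.single 2 k (1:ℝ) : lp (fun _ : ℕ => ℝ) 2)) (cc j t • lp.single 2 j (1:ℝ)))
      = fun j : ℕ => if j = k then cc k t else 0 := by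
    funext j
    simp only [innerSL_apply_apply, real_inner_smul_right]
    rw [lp.inner_single_left]
    by_cases hjk : j = k
    · subst hjk
      simp [lp.single_apply_self, RCLike.inner_apply]
    · rw [lp.single_apply_ne 2 j _ (Ne.symm hjk)]
      simp [hjk]
  rw [hterm] at h'
  exact h'.unique (hasSum_ite_eq k (cc k t))

lemma inner_min (w : ℝ → lp (fun _ : ℕ => ℝ) 2)
    (hw : ∀ t ∈ Set.Icc (0:ℝ) 1, HasSum (fun k : ℕ => cc k t • lp.single 2 k (1:ℝ)) (w t))
    {a b : ℝ} (hb0 : 0 ≤ b) (hba : b ≤ a) (ha1 : a ≤ 1) :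
    (inner ℝ (w a) (w b) : ℝ) = b := by
  have hpi := Real.pi_pos
  have hπ0 : (π:ℝ) ≠ 0 := ne_of_gt hpi
  have haI : a ∈ Set.Icc (0:ℝ) 1 := ⟨le_trans hb0 hba, ha1⟩
  have hbI : b ∈ Set.Icc (0:ℝ) 1 := ⟨hb0, le_trans hba ha1⟩
  -- expand inner product as sum
  have h1 := (innerSL ℝ (w a)).hasSum (hw b hbI)
  have hterm : (fun k : ℕ => (innerSL ℝ (w a)) (cc k b • lp.single 2 k (1:ℝ)))
      = fun k : ℕ => cc k b * cc k a := by
    funext k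
    simp only [innerSL_apply_apply, real_inner_smul_right]
    rw [real_inner_comm, coord_eq (hw a haI) k]
  rw [hterm] at h1
  -- independent computation of the sum
  set θ₁ := π * (a - b) / 2 with hθ₁
  set θ₂ := π * (a + b) / 2 with hθ₂
  have h2 : HasSum (fun k : ℕ => cc k b * cc k a) b := by
    have hs1 : HasSum (fun k : ℕ => Real.cos ((2*(k:ℝ)+1)*θ₁) / (2*(k:ℝ)+1)^2) (π^2/8 - π*θ₁/4) := by
      apply oddCos
      · rw [hθ₁]; nlinarith
      · rw [hθ₁]; nlinarith
    have hs2 : HasSum (fun k : ℕ => Real.cos ((2*(k:ℝ)+1)*θ₂) / (2*(k:ℝ)+1)^2) (π^2/8 - π*θ₂/4) := by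
      apply oddCos
      · rw [hθ₂]; nlinarith
      · rw [hθ₂]; nlinarith
    have h := (hs1.sub hs2).mul_left (4/π^2)
    have hsum : (4/π^2) * ((π^2/8 - π*θ₁/4) - (π^2/8 - π*θ₂/4)) = b := by
      rw [hθ₁, hθ₂]; field_simp; ring
    rw [hsum] at h
    have hfun : (fun k : ℕ => 4/π^2 * (Real.cos ((2*(k:ℝ)+1)*θ₁) / (2*(k:ℝ)+1)^2
        - Real.cos ((2*(k:ℝ)+1)*θ₂) / (2*(k:ℝ)+1)^2)) = fun k : ℕ => cc k b * cc k a := by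
      funext k
      have hd : (2*(k:ℝ)+1) ≠ 0 := by positivity
      have h2 : Real.sqrt 2 ^ 2 = 2 := Real.sq_sqrt (by norm_num)
      have e1 : (2*(k:ℝ)+1)*θ₁ = π * ((k:ℝ) + 1/2) * a - π * ((k:ℝ) + 1/2) * b := by
        rw [hθ₁]; ring
      have e2 : (2*(k:ℝ)+1)*θ₂ = π * ((k:ℝ) + 1/2) * a + π * ((k:ℝ) + 1/2) * b := by
        rw [hθ₂]; ring
      rw [e1, e2, Real.cos_sub, Real.cos_add]
      simp only [cc]
      field_simp
      ring_nf
      rw [h2]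
      ring
    rw [hfun] at h
    exact h
  exact h1.unique h2

/-- Increments of the Wiener spiral over disjoint time intervals are orthogonal. -/
theorem stmt_2 (w : ℝ → lp (fun _ : ℕ => ℝ) 2)
    (hw : ∀ t ∈ Set.Icc (0:ℝ) 1,
      HasSum (fun k : ℕ =>
        ((2 * Real.sqrt 2 / Real.pi) *
          (Real.sin (Real.pi * ((k : ℝ) + 1/2) * t) / (2 * (k : ℝ) + 1)))
            • lp.single 2 k (1:ℝ)) (w t)) :
    ∀ v u s t : ℝ, 0 ≤ v → v ≤ u → u ≤ s → s ≤ t → t ≤ 1 →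
      (inner ℝ (w t - w s) (w u - w v) : ℝ) = 0 := by
  have hw' : ∀ t ∈ Set.Icc (0:ℝ) 1,
      HasSum (fun k : ℕ => cc k t • lp.single 2 k (1:ℝ)) (w t) := hw
  intro v u s t hv hvu hus hst ht1
  have hu0 : 0 ≤ u := hv.trans hvu
  have hs1 : s ≤ 1 := hst.trans ht1
  have htu : (inner ℝ (w t) (w u) : ℝ) = u := inner_min w hw' hu0 (hus.trans hst) ht1
  have htv : (inner ℝ (w t) (w v) : ℝ) = v := inner_min w hw' hv (hvu.trans (hus.trans hst)) ht1
  have hsu : (inner ℝ (w s) (w u) : ℝ) = u := inner_min w hw' hu0 hus hs1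
  have hsv : (inner ℝ (w s) (w v) : ℝ) = v := inner_min w hw' hv (hvu.trans hus) hs1
  rw [inner_sub_left, inner_sub_right, inner_sub_right, htu, htv, hsu, hsv]
  ring
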